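/- arXiv:2405.13584 — 4 statements merged into one kernel-verified Lean document; each statement's English description precedes it below -/
import Mathlib

section
/- Let E be a real normed vector space, let N be a nonempty finite index set, let g : N → E assign a vector (a gradient) to each index, and let S be a nonempty subset of N. Then there exists a weight function θ : S → ℕ with ∑_{j∈S} θ(j) = |N| such that ‖∑_{i∈N} g(i) − ∑_{j∈S} θ(j) • g(j)‖ ≤ ∑_{i∈N} min_{j∈S} ‖g(i) − g(j)‖. (This is Theorem 1 of the paper: the quantity DUB(S) = ∑_{i∈N} min_{j∈S} ‖g(i) − g(j)‖ upper-bounds the best weighted-subset approximation error of the full aggregated gradient.) -/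
open Finset

/-- Theorem 1 of the paper: DUB(S) = ∑_{i∈N} min_{j∈S} ‖g i − g j‖ upper-bounds the
best weighted-subset approximation error, with natural-number weights summing to |N|. -/
theorem dub_upper_bound {E : Type*} [NormedAddCommGroup E] [NormedSpace ℝ E]
    {ι : Type*} [Fintype ι] [Nonempty ι] (g : ι → E) (S : Finset ι) (hS : S.Nonempty) :
    ∃ θ : ι → ℕ, (∑ j ∈ S, θ j) = Fintype.card ι ∧
      ‖(∑ i, g i) - ∑ j ∈ S, (θ j) • g j‖ ≤
        ∑ i, S.inf' hS (fun j => ‖g i - g j‖) := by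
  classical
  -- choose a nearest element n i ∈ S for each i
  have hch : ∀ i : ι, ∃ j ∈ S, S.inf' hS (fun j => ‖g i - g j‖) = ‖g i - g j‖ :=
    fun i => S.exists_mem_eq_inf' hS _
  choose n hnS hn using hch
  refine ⟨fun j => (Finset.univ.filter (fun i => n i = j)).card, ?_, ?_⟩
  · rw [← Finset.card_univ]
    exact (Finset.card_eq_sum_card_fiberwise (fun i _ => Finset.mem_coe.mp (hnS i))).symm
  · have hsum : (∑ j ∈ S, ((Finset.univ.filter (fun i => n i = j)).card) • g j)
        = ∑ i, g (n i) := by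
      rw [← Finset.sum_fiberwise_of_maps_to (fun i _ => hnS i) (fun i => g (n i))]
      refine Finset.sum_congr rfl fun j _ => ?_
      rw [Finset.sum_congr rfl (fun i hi => by
        rw [(Finset.mem_filter.mp hi).2]), Finset.sum_const]
    rw [hsum, ← Finset.sum_sub_distrib]
    refine (norm_sum_le _ _).trans (Finset.sum_le_sum fun i _ => ?_)
    rw [hn i]
end

section
/- Let δ ≥ 0 and let x, y : ℕ → ℝ be two sequences. Define virtual queues Z, Q : ℕ → ℝ by Z(0) = Q(0) = 0, Z(t+1) = max(Z(t) + x(t) − y(t) − δ, 0), and Q(t+1) = max(Q(t) − x(t) + y(t) − δ, 0). If both Z(T)/T → 0 and Q(T)/T → 0 as T → ∞, then limsup_{T→∞} |(1/T) ∑_{t=0}^{T−1} (x(t) − y(t))| ≤ δ. -/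
open Finset Filter

/-- Two-sided fairness constraint from two stable virtual queues:
if Z(T)/T → 0 and Q(T)/T → 0, then limsup |(1/T)∑ (x t − y t)| ≤ δ. -/
theorem two_queue_stability_implies_two_sided_constraint
    (δ : ℝ) (hδ : 0 ≤ δ) (x y : ℕ → ℝ) (Z Q : ℕ → ℝ)
    (hZ0 : Z 0 = 0) (hQ0 : Q 0 = 0)
    (hZ : ∀ t, Z (t + 1) = max (Z t + x t - y t - δ) 0)
    (hQ : ∀ t, Q (t + 1) = max (Q t - x t + y t - δ) 0)
    (hZstable : Tendsto (fun T : ℕ => Z T / (T : ℝ)) atTop (nhds 0))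
    (hQstable : Tendsto (fun T : ℕ => Q T / (T : ℝ)) atTop (nhds 0)) :
    Filter.limsup
      (fun T : ℕ => |(1 / (T : ℝ)) * ∑ t ∈ Finset.range T, (x t - y t)|) atTop ≤ δ := by
  set f : ℕ → ℝ := fun T => |(1 / (T : ℝ)) * ∑ t ∈ Finset.range T, (x t - y t)| with hf
  have hZb : ∀ T, ∑ t ∈ Finset.range T, (x t - y t) - T * δ ≤ Z T := by
    intro T
    induction T with
    | zero => simp [hZ0]
    | succ n ih =>
        rw [Finset.sum_range_succ, hZ n]
        have : Z n + x n - y n - δ ≤ max (Z n + x n - y n - δ) 0 := le_max_left _ _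
        push_cast
        nlinarith
  have hQb : ∀ T, -(∑ t ∈ Finset.range T, (x t - y t)) - T * δ ≤ Q T := by
    intro T
    induction T with
    | zero => simp [hQ0]
    | succ n ih =>
        rw [Finset.sum_range_succ, hQ n]
        have : Q n - x n + y n - δ ≤ max (Q n - x n + y n - δ) 0 := le_max_left _ _
        push_cast
        nlinarith
  have hZnn : ∀ T, 0 ≤ Z T := by
    intro T; cases T with
    | zero => simp [hZ0]
    | succ n => rw [hZ n]; exact le_max_right _ _
  have hQnn : ∀ T, 0 ≤ Q T := by
    intro T; cases T with
    | zero => simp [hQ0]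
    | succ n => rw [hQ n]; exact le_max_right _ _
  set g : ℕ → ℝ := fun T => Z T / T + Q T / T + δ with hg
  have hfg : ∀ᶠ T in atTop, f T ≤ g T := by
    filter_upwards [eventually_ge_atTop 1] with T hT
    have hTpos : (0 : ℝ) < T := by exact_mod_cast hT
    have habs : |∑ t ∈ Finset.range T, (x t - y t)| ≤ Z T + Q T + T * δ := by
      rw [abs_le]
      constructor
      · have := hQb T; nlinarith [hZnn T]
      · have := hZb T; nlinarith [hQnn T]
    have : f T = |∑ t ∈ Finset.range T, (x t - y t)| / T := by
      show |1 / (T:ℝ) * ∑ t ∈ Finset.range T, (x t - y t)| = _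
      rw [abs_mul, abs_of_pos (by positivity : (0:ℝ) < 1 / T)]
      ring
    rw [this, hg]
    rw [div_le_iff₀ hTpos]
    calc |∑ t ∈ Finset.range T, (x t - y t)| ≤ Z T + Q T + T * δ := habs
      _ = (Z T / T + Q T / T + δ) * T := by field_simp
  have hgt : Tendsto g atTop (nhds δ) := by
    have := (hZstable.add hQstable).add_const δ
    simpa using this
  have h1 : Filter.limsup f atTop ≤ Filter.limsup g atTop := by
    refine limsup_le_limsup hfg ?_ hgt.isBoundedUnder_le
    exact isCoboundedUnder_le_of_le atTop (fun T => abs_nonneg _)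
  rw [hgt.limsup_eq] at h1
  exact h1
end

section
/- Let μ > 0, β > 1/μ, γ ≥ βμ, a ≥ 0, b ≥ 0, and let η(t) = β/(t + γ) for t ∈ ℕ. Let x : ℕ → ℝ be a sequence with x(t) ≥ 0 for all t satisfying x(t+1) ≤ (1 − μ·η(t))·x(t) + a·η(t)² + b·η(t) for all t ≥ 0. Define v = max{ a·β²/(β·μ − 1), γ·max(x(0) − b/μ, 0) }. Then for all t ∈ ℕ, x(t) ≤ v/(t + γ) + b/μ. In particular x(t) = O(1/t) + O(b). -/
/-- Sequence-recursion lemma underlying the convergence proof of Theorem 4: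
a nonnegative sequence satisfying x(t+1) ≤ (1 − μη(t))x(t) + aη(t)² + bη(t) with
η(t) = β/(t+γ) obeys x(t) ≤ v/(t+γ) + b/μ, i.e. the rate O(1/t) + O(b). -/
theorem recursion_convergence_rate
    (μ β γ a b : ℝ) (hμ : 0 < μ) (hβ : 1 / μ < β) (hγ : β * μ ≤ γ)
    (ha : 0 ≤ a) (hb : 0 ≤ b)
    (η : ℕ → ℝ) (hη : ∀ t : ℕ, η t = β / ((t : ℝ) + γ))
    (x : ℕ → ℝ) (hx : ∀ t, 0 ≤ x t)
    (hrec : ∀ t : ℕ, x (t + 1) ≤ (1 - μ * η t) * x t + a * (η t) ^ 2 + b * η t)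
    (v : ℝ) (hv : v = max (a * β ^ 2 / (β * μ - 1)) (γ * max (x 0 - b / μ) 0)) :
    ∀ t : ℕ, x t ≤ v / ((t : ℝ) + γ) + b / μ := by
  have hβμ : 1 < β * μ := by
    rw [div_lt_iff₀ hμ] at hβ
    linarith
  have hγ1 : 1 < γ := lt_of_lt_of_le hβμ hγ
  have hγ0 : 0 < γ := by linarith
  have hv0 : 0 ≤ v := by
    rw [hv]
    exact le_max_of_le_right (mul_nonneg hγ0.le (le_max_right _ _))
  have hv1 : a * β ^ 2 ≤ v * (β * μ - 1) := by
    have h1 : a * β ^ 2 / (β * μ - 1) ≤ v := by rw [hv]; exact le_max_left _ _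
    have h2 : (0:ℝ) < β * μ - 1 := by linarith
    calc a * β ^ 2 = a * β ^ 2 / (β * μ - 1) * (β * μ - 1) := by field_simp
    _ ≤ v * (β * μ - 1) := by nlinarith
  have hv2 : γ * (x 0 - b / μ) ≤ v := by
    rw [hv]
    exact le_max_of_le_right (mul_le_mul_of_nonneg_left (le_max_left _ _) hγ0.le)
  intro t
  induction t with
  | zero =>
    simp only [Nat.cast_zero, zero_add]
    have h0 : x 0 - b / μ ≤ v / γ := by
      rw [le_div_iff₀ hγ0]; nlinarith
    linarith
  | succ t ih =>
    have hs0 : (0:ℝ) < (t : ℝ) + γ := by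
      have := Nat.cast_nonneg (α := ℝ) t
      linarith
    set s : ℝ := (t : ℝ) + γ with hs
    have hs1 : (0:ℝ) < s + 1 := by linarith
    have hsγ : β * μ ≤ s := by
      have := Nat.cast_nonneg (α := ℝ) t
      simp only [hs]; linarith
    have hη0 : 0 ≤ 1 - μ * (β / s) := by
      have : μ * (β / s) ≤ 1 := by
        rw [mul_div_assoc', div_le_one hs0]; nlinarith
      linarith
    have step1 : x (t + 1) ≤ (1 - μ * (β / s)) * (v / s + b / μ) + a * (β / s) ^ 2 + b * (β / s) := by
      have h := hrec t
      rw [hη t, ← hs] at h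
      have h2 : (1 - μ * (β / s)) * x t ≤ (1 - μ * (β / s)) * (v / s + b / μ) := by
        exact mul_le_mul_of_nonneg_left ih hη0
      linarith
    have key : (1 - μ * (β / s)) * (v / s + b / μ) + a * (β / s) ^ 2 + b * (β / s)
        ≤ v / (s + 1) + b / μ := by
      rw [← sub_nonneg]
      have hexp : v / (s + 1) + b / μ - ((1 - μ * (β / s)) * (v / s + b / μ) + a * (β / s) ^ 2 + b * (β / s))
          = ((v * (β * μ - 1) - a * β ^ 2) * (s + 1) + v * (s * s - (s - 1) * (s + 1))) / (s ^ 2 * (s + 1)) := by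
        field_simp
        ring
      rw [hexp]
      apply div_nonneg _ (by positivity)
      have h1 : s * s - (s - 1) * (s + 1) = 1 := by ring
      rw [h1]
      nlinarith
    have hcast : ((t + 1 : ℕ) : ℝ) + γ = s + 1 := by
      push_cast; simp only [hs]; ring
    rw [hcast]
    linarith
end

section
/- Let E and F be real normed vector spaces, N a nonempty finite index set, and S a nonempty subset of N. For each i ∈ N let g_i : E → F be an L-Lipschitz map (L ≥ 0), and let u, w : N → E be points with ‖u(i) − w(i)‖ ≤ D for all i ∈ N (D ≥ 0). Let θ : S → ℝ be nonnegative weights with ∑_{j∈S} θ(j) = |N|, and suppose ‖∑_{j∈S} θ(j) • g_j(w(j)) − ∑_{i∈N} g_i(w(i))‖ ≤ ρ for some ρ ≥ 0. Then ‖∑_{j∈S} θ(j) • g_j(u(j)) − ∑_{i∈N} g_i(u(i))‖ ≤ ρ + 2·|N|·L·D. -/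
open Finset

/-- Perturbation step in the convergence proof of Theorem 4: if the weighted subset
aggregation of the L-Lipschitz gradients approximates the full aggregation up to ρ at
points w, and u is a pointwise D-perturbation of w, then the approximation error at
u is at most ρ + 2|N|LD. -/
theorem subset_gradient_approx_perturbation
    {E F : Type*} [NormedAddCommGroup E] [NormedSpace ℝ E]
    [NormedAddCommGroup F] [NormedSpace ℝ F]
    {ι : Type*} [Fintype ι] [Nonempty ι]
    (S : Finset ι) (hS : S.Nonempty)
    (g : ι → E → F) (L : ℝ) (hL : 0 ≤ L)
    (hLip : ∀ i : ι, ∀ x y : E, ‖g i x - g i y‖ ≤ L * ‖x - y‖)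
    (u w : ι → E) (D : ℝ) (hD : 0 ≤ D)
    (huw : ∀ i, ‖u i - w i‖ ≤ D)
    (θ : ι → ℝ) (hθ : ∀ j, 0 ≤ θ j)
    (hθsum : (∑ j ∈ S, θ j) = (Fintype.card ι : ℝ))
    (ρ : ℝ) (hρ : 0 ≤ ρ)
    (happrox : ‖(∑ j ∈ S, θ j • g j (w j)) - ∑ i, g i (w i)‖ ≤ ρ) :
    ‖(∑ j ∈ S, θ j • g j (u j)) - ∑ i, g i (u i)‖ ≤
      ρ + 2 * (Fintype.card ι : ℝ) * L * D := by
  set A := ∑ j ∈ S, θ j • g j (u j)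
  set B := ∑ j ∈ S, θ j • g j (w j)
  set C := ∑ i, g i (w i)
  set Du := ∑ i, g i (u i)
  have h1 : ‖A - B‖ ≤ (Fintype.card ι : ℝ) * L * D := by
    calc ‖A - B‖ = ‖∑ j ∈ S, θ j • (g j (u j) - g j (w j))‖ := by
          simp [A, B, smul_sub, Finset.sum_sub_distrib]
      _ ≤ ∑ j ∈ S, ‖θ j • (g j (u j) - g j (w j))‖ := norm_sum_le _ _
      _ ≤ ∑ j ∈ S, θ j * (L * D) := by
          apply Finset.sum_le_sum
          intro j _
          rw [norm_smul, Real.norm_eq_abs, abs_of_nonneg (hθ j)]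
          refine mul_le_mul_of_nonneg_left ?_ (hθ j)
          exact le_trans (hLip j _ _) (mul_le_mul_of_nonneg_left (huw j) hL)
      _ = (Fintype.card ι : ℝ) * L * D := by
          rw [← Finset.sum_mul, hθsum]; ring
  have h2 : ‖C - Du‖ ≤ (Fintype.card ι : ℝ) * L * D := by
    calc ‖C - Du‖ = ‖∑ i, (g i (w i) - g i (u i))‖ := by
          simp [C, Du, Finset.sum_sub_distrib]
      _ ≤ ∑ i, ‖g i (w i) - g i (u i)‖ := norm_sum_le _ _
      _ ≤ ∑ _i : ι, L * D := by
          apply Finset.sum_le_sum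
          intro i _
          refine le_trans (hLip i _ _) (mul_le_mul_of_nonneg_left ?_ hL)
          rw [← norm_neg]; simpa using huw i
      _ = (Fintype.card ι : ℝ) * L * D := by
          simp [Finset.sum_const, mul_assoc]
  calc ‖A - Du‖ = ‖(A - B) + (B - C) + (C - Du)‖ := by abel_nf
    _ ≤ ‖(A - B) + (B - C)‖ + ‖C - Du‖ := norm_add_le _ _
    _ ≤ ‖A - B‖ + ‖B - C‖ + ‖C - Du‖ := by gcongr; exact norm_add_le _ _
    _ ≤ (Fintype.card ι : ℝ) * L * D + ρ + (Fintype.card ι : ℝ) * L * D := by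
        gcongr
    _ = ρ + 2 * (Fintype.card ι : ℝ) * L * D := by ring
end
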